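/- arXiv:2407.01305 — 5 statements merged into one kernel-verified Lean document; each statement's English description precedes it below -/
import Mathlib

section
/- Define MSE_GMM(η²) = σ_glob² − (2/π) (∑_{k=1}^K p_k σ_k² / sqrt(σ_k² + η²))² and MSE_Gauss(η²) = σ_glob² − (2/π) σ_glob⁴ / (σ_glob² + η²), where σ_glob² = ∑_k p_k σ_k². Then for every η² > 0, MSE_Gauss(η²) ≤ MSE_GMM(η²). -/
open Real Finset

theorem mse_gauss_le_mse_gmm {K : ℕ} (p σsq : Fin K → ℝ)
    (hp : ∀ k, 0 ≤ p k) (hsum : ∑ k, p k = 1) (hσ : ∀ k, 0 < σsq k)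
    (t : ℝ) (ht : 0 < t) :
    (∑ k, p k * σsq k) - (2/π) * ((∑ k, p k * σsq k)^2 / ((∑ k, p k * σsq k) + t))
      ≤ (∑ k, p k * σsq k) - (2/π) * (∑ k, p k * (σsq k / Real.sqrt (σsq k + t)))^2 := by
  set S : ℝ := ∑ k, p k * σsq k with hS
  have hSpos : 0 < S := by
    obtain ⟨k, hk⟩ : ∃ k, 0 < p k := by
      by_contra h
      push_neg at h
      have : ∀ k, p k = 0 := fun k => le_antisymm (h k) (hp k)
      simp [this] at hsum
    have : 0 < p k * σsq k := mul_pos hk (hσ k)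
    exact this.trans_le (Finset.single_le_sum (fun i _ => mul_nonneg (hp i) (hσ i).le) (Finset.mem_univ k))
  have hSt : 0 < S + t := by linarith
  -- Step B: ∑ p/(σ+t) ≥ 1/(S+t)
  have hσt : ∀ k, 0 < σsq k + t := fun k => by linarith [hσ k]
  have hCS2 : 1 ≤ (S + t) * ∑ k, p k / (σsq k + t) := by
    have h := Finset.sum_mul_sq_le_sq_mul_sq Finset.univ
      (fun k => Real.sqrt (p k * (σsq k + t))) (fun k => Real.sqrt (p k / (σsq k + t)))
    have h1 : ∀ k : Fin K, Real.sqrt (p k * (σsq k + t)) * Real.sqrt (p k / (σsq k + t)) = p k := by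
      intro k
      rw [← Real.sqrt_mul (mul_nonneg (hp k) (hσt k).le)]
      have h0 := (hσt k).ne'
      have : p k * (σsq k + t) * (p k / (σsq k + t)) = p k ^ 2 := by
        field_simp
      rw [this, Real.sqrt_sq (hp k)]
    have h2 : ∀ k : Fin K, Real.sqrt (p k * (σsq k + t)) ^ 2 = p k * (σsq k + t) :=
      fun k => Real.sq_sqrt (mul_nonneg (hp k) (hσt k).le)
    have h3 : ∀ k : Fin K, Real.sqrt (p k / (σsq k + t)) ^ 2 = p k / (σsq k + t) :=
      fun k => Real.sq_sqrt (div_nonneg (hp k) (hσt k).le)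
    simp only [h1, h2, h3] at h
    have hsum2 : ∑ k, p k * (σsq k + t) = S + t := by
      simp [mul_add, Finset.sum_add_distrib, ← Finset.sum_mul, hsum, hS]
    rw [hsum] at h
    rw [hsum2] at h
    simpa using h
  -- Step B': ∑ p σ/(σ+t) ≤ S/(S+t)
  have hB : ∑ k, p k * (σsq k / (σsq k + t)) ≤ S / (S + t) := by
    have heq : ∑ k, p k * (σsq k / (σsq k + t)) = 1 - t * ∑ k, p k / (σsq k + t) := by
      rw [Finset.mul_sum, ← hsum, ← Finset.sum_sub_distrib]
      refine Finset.sum_congr rfl fun k _ => ?_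
      have h := (hσt k).ne'
      field_simp
      ring
    rw [heq]
    have ht2 : t / (S + t) ≤ t * ∑ k, p k / (σsq k + t) := by
      rw [div_le_iff₀ hSt]
      calc t = t * 1 := (mul_one t).symm
        _ ≤ t * ((S + t) * ∑ k, p k / (σsq k + t)) :=
            mul_le_mul_of_nonneg_left hCS2 ht.le
        _ = t * (∑ k, p k / (σsq k + t)) * (S + t) := by ring
    have : S / (S + t) = 1 - t / (S + t) := by field_simp; ring
    rw [this]
    linarith
  -- Step A: Cauchy-Schwarz
  have hA : (∑ k, p k * (σsq k / Real.sqrt (σsq k + t)))^2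
      ≤ S * ∑ k, p k * (σsq k / (σsq k + t)) := by
    have h := Finset.sum_mul_sq_le_sq_mul_sq Finset.univ
      (fun k => Real.sqrt (p k * σsq k)) (fun k => Real.sqrt (p k * (σsq k / (σsq k + t))))
    have h1 : ∀ k : Fin K, Real.sqrt (p k * σsq k) * Real.sqrt (p k * (σsq k / (σsq k + t)))
        = p k * (σsq k / Real.sqrt (σsq k + t)) := by
      intro k
      rw [← Real.sqrt_mul (mul_nonneg (hp k) (hσ k).le)]
      have h0 := (hσt k).ne'
      have : p k * σsq k * (p k * (σsq k / (σsq k + t)))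
          = (p k * σsq k) ^ 2 / (σsq k + t) := by field_simp
      rw [this, Real.sqrt_div (sq_nonneg _),
        Real.sqrt_sq (mul_nonneg (hp k) (hσ k).le), mul_div_assoc]
    have h2 : ∀ k : Fin K, Real.sqrt (p k * σsq k) ^ 2 = p k * σsq k :=
      fun k => Real.sq_sqrt (mul_nonneg (hp k) (hσ k).le)
    have h3 : ∀ k : Fin K, Real.sqrt (p k * (σsq k / (σsq k + t))) ^ 2
        = p k * (σsq k / (σsq k + t)) :=
      fun k => Real.sq_sqrt (mul_nonneg (hp k) (div_nonneg (hσ k).le (hσt k).le))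
    simp only [h1, h2, h3] at h
    exact h
  have hfinal : (∑ k, p k * (σsq k / Real.sqrt (σsq k + t)))^2 ≤ S^2 / (S + t) := by
    calc (∑ k, p k * (σsq k / Real.sqrt (σsq k + t)))^2
        ≤ S * ∑ k, p k * (σsq k / (σsq k + t)) := hA
      _ ≤ S * (S / (S + t)) := mul_le_mul_of_nonneg_left hB hSpos.le
      _ = S^2 / (S + t) := by ring
  have hpi : 0 ≤ 2/π := by positivity
  nlinarith [mul_le_mul_of_nonneg_left hfinal hpi]
end

section
/- The sequence g(M) = (4M²/π) sin²(π/(4M)) is strictly increasing in M for M ≥ 1, and g(M) < π/4 for all positive integers M; consequently the MSE σ_glob² − g(M) σ̄² is strictly decreasing in M and bounded below by σ_glob² − (π/4) σ̄². -/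
open Real Finset

noncomputable def gainFactor (M : ℕ) : ℝ :=
  (4 * (M:ℝ)^2 / π) * Real.sin (π / (4*(M:ℝ)))^2

/-- `sin` divided by the identity is strictly decreasing on `(0, π]`. -/
lemma sinc_strict_anti {a b : ℝ} (ha : 0 < a) (hab : a < b) (hb : b ≤ π) :
    Real.sin b / b < Real.sin a / a := by
  have hb0 : 0 < b := ha.trans hab
  have key : Real.sin ((a / b) • b) > (a / b) • Real.sin b := by
    have h1 : (0:ℝ) < 1 - a / b := by rw [sub_pos, div_lt_one hb0]; exact hab
    have h2 : (0:ℝ) < a / b := div_pos ha hb0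
    have h3 : (1 - a / b) + a / b = 1 := by ring
    have := strictConcaveOn_sin_Icc.2
      ⟨le_rfl, Real.pi_pos.le⟩ ⟨hb0.le, hb⟩ hb0.ne h1 h2 h3
    simpa [Real.sin_zero] using this
  have h2 : a * Real.sin b < b * Real.sin a := by
    have : (a / b) * b = a := div_mul_cancel₀ a hb0.ne'
    rw [smul_eq_mul, smul_eq_mul, this] at key
    calc a * Real.sin b = b * (a / b * Real.sin b) := by
          field_simp
      _ < b * Real.sin a := by
          exact (mul_lt_mul_iff_right₀ hb0).2 key
  rw [div_lt_div_iff₀ hb0 ha]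
  linarith [h2]

lemma gain_eq (M : ℕ) (hM : 1 ≤ M) :
    gainFactor M = (π/4) * (Real.sin (π/(4*(M:ℝ))) / (π/(4*(M:ℝ))))^2 := by
  have hM0 : (0:ℝ) < (M:ℝ) := by exact_mod_cast hM
  have hπ := Real.pi_pos
  rw [gainFactor]
  field_simp

lemma gain_lt (M : ℕ) (hM : 1 ≤ M) : gainFactor M < π/4 := by
  have hM0 : (0:ℝ) < (M:ℝ) := by exact_mod_cast hM
  have hM1 : (1:ℝ) ≤ (M:ℝ) := by exact_mod_cast hM
  have hπ := Real.pi_pos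
  have hx : 0 < π/(4*(M:ℝ)) := by positivity
  rw [gain_eq M hM]
  have h1 : Real.sin (π/(4*(M:ℝ))) < π/(4*(M:ℝ)) := Real.sin_lt hx
  have h2 : (Real.sin (π/(4*(M:ℝ))) / (π/(4*(M:ℝ))))^2 < 1 := by
    have hge : 0 ≤ Real.sin (π/(4*(M:ℝ))) / (π/(4*(M:ℝ))) := by
      apply div_nonneg _ hx.le
      apply Real.sin_nonneg_of_nonneg_of_le_pi hx.le
      calc π/(4*(M:ℝ)) ≤ π/4 := by
            apply div_le_div_of_nonneg_left hπ.le (by norm_num)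
            nlinarith
        _ ≤ π := by linarith
    have hlt : Real.sin (π/(4*(M:ℝ))) / (π/(4*(M:ℝ))) < 1 :=
      (div_lt_one hx).2 h1
    nlinarith
  nlinarith

lemma gain_mono (M : ℕ) (hM : 1 ≤ M) : gainFactor M < gainFactor (M+1) := by
  have hM0 : (0:ℝ) < (M:ℝ) := by exact_mod_cast hM
  have hM1 : (1:ℝ) ≤ (M:ℝ) := by exact_mod_cast hM
  have hπ := Real.pi_pos
  set a := π/(4*((M:ℝ)+1)) with ha_def
  set b := π/(4*(M:ℝ)) with hb_def
  have ha : 0 < a := by positivity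
  have hab : a < b := by
    apply div_lt_div_of_pos_left hπ (by positivity)
    nlinarith
  have hbπ : b ≤ π := by
    rw [hb_def]
    rw [div_le_iff₀ (by positivity)]
    nlinarith
  have key := sinc_strict_anti ha hab hbπ
  have hbpos : 0 < b := ha.trans hab
  have hsa : 0 ≤ Real.sin b / b := by
    apply div_nonneg _ hbpos.le
    exact Real.sin_nonneg_of_nonneg_of_le_pi hbpos.le hbπ
  rw [gain_eq M hM, gain_eq (M+1) (by omega)]
  push_cast
  rw [← ha_def, ← hb_def]
  have : (Real.sin b / b)^2 < (Real.sin a / a)^2 := by nlinarith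
  nlinarith

theorem gain_increasing_mse_decreasing {K : ℕ} (p σ : Fin K → ℝ)
    (hp : ∀ k, 0 ≤ p k) (hsum : ∑ k, p k = 1) (hσ : ∀ k, 0 < σ k) :
    (∀ M : ℕ, 1 ≤ M → gainFactor M < gainFactor (M+1)) ∧
    (∀ M : ℕ, 1 ≤ M → gainFactor M < π/4) ∧
    (∀ M : ℕ, 1 ≤ M →
      (∑ k, p k * σ k^2) - gainFactor (M+1) * (∑ k, p k * σ k)^2
        < (∑ k, p k * σ k^2) - gainFactor M * (∑ k, p k * σ k)^2) ∧
    (∀ M : ℕ, 1 ≤ M →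
      (∑ k, p k * σ k^2) - (π/4) * (∑ k, p k * σ k)^2
        ≤ (∑ k, p k * σ k^2) - gainFactor M * (∑ k, p k * σ k)^2) := by
  have hbar : 0 < (∑ k, p k * σ k) := by
    have h1 : ∃ k, p k ≠ 0 := by
      by_contra h
      push_neg at h
      simp [h] at hsum
    obtain ⟨k0, hk0⟩ := h1
    apply Finset.sum_pos'
    · intro k _
      exact mul_nonneg (hp k) (hσ k).le
    · exact ⟨k0, Finset.mem_univ _,
        mul_pos ((hp k0).lt_of_ne (Ne.symm hk0)) (hσ k0)⟩
  refine ⟨gain_mono, gain_lt, ?_, ?_⟩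
  · intro M hM
    have := gain_mono M hM
    have hsq : 0 < (∑ k, p k * σ k)^2 := pow_pos hbar 2
    nlinarith
  · intro M hM
    have := gain_lt M hM
    nlinarith [sq_nonneg (∑ k, p k * σ k)]
end

section
/- For all η² > 0, 0 < MSE_GMM(η²) ≤ σ_glob², where MSE_GMM(η²) = σ_glob² − (2/π)(∑_k p_k σ_k²/sqrt(σ_k² + η²))². In particular ∑_k p_k σ_k²/sqrt(σ_k² + η²) < sqrt(π/2) · σ_glob. -/
open Real Finset

theorem mse_gmm_bounds {K : ℕ} (p σsq : Fin K → ℝ)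
    (hp : ∀ k, 0 ≤ p k) (hsum : ∑ k, p k = 1) (hσ : ∀ k, 0 < σsq k)
    (t : ℝ) (ht : 0 < t) :
    (0 < (∑ k, p k * σsq k)
        - (2/π) * (∑ k, p k * (σsq k / Real.sqrt (σsq k + t)))^2 ∧
      (∑ k, p k * σsq k)
        - (2/π) * (∑ k, p k * (σsq k / Real.sqrt (σsq k + t)))^2
        ≤ ∑ k, p k * σsq k) ∧
    ∑ k, p k * (σsq k / Real.sqrt (σsq k + t))
      < Real.sqrt (π/2) * Real.sqrt (∑ k, p k * σsq k) := by
  set x : Fin K → ℝ := fun k => σsq k / Real.sqrt (σsq k + t) with hx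
  set A : ℝ := ∑ k, p k * x k with hA
  set S : ℝ := ∑ k, p k * σsq k with hS
  have hSpos : 0 < S := by
    obtain ⟨k, hk⟩ : ∃ k, p k ≠ 0 := by
      by_contra h
      push_neg at h
      simp [h] at hsum
    have hk' : 0 < p k := lt_of_le_of_ne (hp k) (Ne.symm hk)
    have : p k * σsq k ≤ S :=
      Finset.single_le_sum (fun i _ => mul_nonneg (hp i) (hσ i).le) (Finset.mem_univ k)
    nlinarith [hσ k]
  -- Cauchy-Schwarz : A^2 ≤ ∑ p k * (x k)^2
  have hcs : A ^ 2 ≤ ∑ k, p k * (x k) ^ 2 := by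
    have := Finset.sum_mul_sq_le_sq_mul_sq Finset.univ
      (fun k => Real.sqrt (p k)) (fun k => Real.sqrt (p k) * x k)
    have h1 : ∀ k : Fin K, Real.sqrt (p k) * (Real.sqrt (p k) * x k) = p k * x k := by
      intro k
      rw [← mul_assoc, Real.mul_self_sqrt (hp k)]
    have h2 : ∀ k : Fin K, Real.sqrt (p k) ^ 2 = p k := fun k => Real.sq_sqrt (hp k)
    have h3 : ∀ k : Fin K, (Real.sqrt (p k) * x k) ^ 2 = p k * x k ^ 2 := by
      intro k
      rw [mul_pow, h2]
    simp only [h1, h3] at this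
    calc A ^ 2 ≤ (∑ k, Real.sqrt (p k) ^ 2) * ∑ k, p k * x k ^ 2 := this
      _ = ∑ k, p k * x k ^ 2 := by
          simp only [h2]; rw [hsum, one_mul]
  have hx2 : ∀ k, p k * (x k) ^ 2 ≤ p k * σsq k := by
    intro k
    have hst : 0 < σsq k + t := by linarith [hσ k]
    have : (x k) ^ 2 = σsq k ^ 2 / (σsq k + t) := by
      rw [hx]
      rw [div_pow, Real.sq_sqrt hst.le]
    rw [this]
    have h4 : σsq k ^ 2 / (σsq k + t) ≤ σsq k := by
      rw [div_le_iff₀ hst]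
      nlinarith [hσ k]
    exact mul_le_mul_of_nonneg_left h4 (hp k)
  have hAS : A ^ 2 ≤ S :=
    hcs.trans (Finset.sum_le_sum fun k _ => hx2 k)
  have hAnn : 0 ≤ A :=
    Finset.sum_nonneg fun k _ => mul_nonneg (hp k)
      (div_nonneg (hσ k).le (Real.sqrt_nonneg _))
  have hπ : 0 < π := Real.pi_pos
  have h2π : 2 / π < 1 := by
    rw [div_lt_one hπ]
    linarith [Real.pi_gt_three]
  refine ⟨⟨?_, ?_⟩, ?_⟩
  · have : (2/π) * A ^ 2 ≤ (2/π) * S :=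
      mul_le_mul_of_nonneg_left hAS (by positivity)
    nlinarith
  · have : 0 ≤ (2/π) * A ^ 2 := by positivity
    linarith
  · have key : A ^ 2 < π / 2 * S := by
      have : S < π / 2 * S := by nlinarith [Real.pi_gt_three]
      linarith
    have : A < Real.sqrt (π / 2 * S) := by
      rw [Real.lt_sqrt hAnn] at *
      linarith [key]
    calc A < Real.sqrt (π / 2 * S) := this
      _ = Real.sqrt (π/2) * Real.sqrt S := Real.sqrt_mul (by positivity) _
end

section
/- Let h ~ ∑_k p_k N(0, σ_k²) (zero-mean scalar real Gaussian mixture), n ~ N(0, η²) independent of h, and r = sign(h + n). Then E[h | r] = sqrt(2/π) (∑_k p_k σ_k²/sqrt(σ_k² + η²)) · r almost surely; in particular the conditional mean estimator is linear in r. -/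
open Real Finset MeasureTheory ProbabilityTheory

open Filter
open scoped NNReal ENNReal

lemma msign : Measurable Real.sign := by
  have h : Real.sign = fun r : ℝ => if r < 0 then (-1:ℝ) else if 0 < r then 1 else 0 :=
    funext fun r => rfl
  rw [h]
  exact Measurable.ite (measurableSet_lt measurable_id measurable_const) measurable_const
    (Measurable.ite (measurableSet_lt measurable_const measurable_id) measurable_const
      measurable_const)

lemma ftc_gauss {v : ℝ} (hv : 0 < v) (a : ℝ) :
    ∫ x in Set.Ioi a, x * Real.exp (-x^2 / (2*v)) = v * Real.exp (-a^2 / (2*v)) := by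
  have hb : 0 < (2*v)⁻¹ := by positivity
  have hint : IntegrableOn (fun x : ℝ => x * Real.exp (-x^2 / (2*v))) (Set.Ioi a) := by
    have := (integrable_mul_exp_neg_mul_sq hb).integrableOn (s := Set.Ioi a)
    refine this.congr_fun (fun x _ => ?_) measurableSet_Ioi
    congr 1
    field_simp
  have hderiv : ∀ x ∈ Set.Ici a, HasDerivAt (fun x : ℝ => -v * Real.exp (-x^2 / (2*v)))
      (x * Real.exp (-x^2 / (2*v))) x := by
    intro x _
    have h1 : HasDerivAt (fun x : ℝ => -x^2 / (2*v)) (-x / v) x := by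
      have := ((hasDerivAt_pow 2 x).neg).div_const (2*v)
      refine this.congr_deriv ?_
      field_simp
      ring
    have := ((h1.exp).const_mul (-v))
    refine this.congr_deriv ?_
    field_simp
  have htend : Tendsto (fun x : ℝ => -v * Real.exp (-x^2 / (2*v))) atTop (nhds 0) := by
    have h1 : Tendsto (fun x : ℝ => -x^2 / (2*v)) atTop atBot := by
      apply Tendsto.atBot_div_const (by positivity)
      exact tendsto_neg_atTop_atBot.comp (tendsto_pow_atTop two_ne_zero)
    have h2 := (Real.tendsto_exp_atBot.comp h1).const_mul (-v)
    simpa using h2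
  rw [integral_Ioi_of_hasDerivAt_of_tendsto' hderiv hint htend]
  ring

lemma gr_wd {v : ℝ≥0} (hv : v ≠ 0) :
    gaussianReal 0 v = (volume : Measure ℝ).withDensity
      (fun x => ((gaussianPDFReal 0 v x).toNNReal : ℝ≥0∞)) := by
  rw [gaussianReal_of_var_ne_zero _ hv]
  rfl

lemma setIntegral_gr {v : ℝ≥0} (hv : v ≠ 0) (f : ℝ → ℝ) {s : Set ℝ} (hs : MeasurableSet s) :
    ∫ x in s, f x ∂(gaussianReal 0 v) = ∫ x in s, gaussianPDFReal 0 v x * f x := by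
  rw [gr_wd hv, restrict_withDensity hs,
    integral_withDensity_eq_integral_smul ((measurable_gaussianPDFReal 0 v).real_toNNReal) f]
  refine integral_congr_ae (Filter.Eventually.of_forall fun x => ?_)
  simp [NNReal.smul_def, Real.coe_toNNReal _ (gaussianPDFReal_nonneg 0 v x)]

lemma integrable_gr_iff {v : ℝ≥0} (hv : v ≠ 0) {f : ℝ → ℝ} (hf : Measurable f) :
    Integrable f (gaussianReal 0 v) ↔
      Integrable (fun x => f x * gaussianPDFReal 0 v x) volume := by
  rw [gr_wd hv, integrable_withDensity_iff ((measurable_gaussianPDFReal 0 v).real_toNNReal.coe_nnreal_ennreal)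
    (Filter.Eventually.of_forall fun x => ENNReal.coe_lt_top) ]
  constructor <;> intro h <;>
  · refine h.congr (Filter.Eventually.of_forall fun x => ?_)
    simp [Real.coe_toNNReal _ (gaussianPDFReal_nonneg 0 v x)]

lemma integrable_id_gr {v : ℝ≥0} (hv : 0 < (v:ℝ)) :
    Integrable (fun x : ℝ => x) (gaussianReal 0 v) := by
  rw [show (fun x : ℝ => x) = id from rfl, integrable_gr_iff (by exact_mod_cast hv.ne') measurable_id]
  have h := (integrable_mul_exp_neg_mul_sq (b := (2*(v:ℝ))⁻¹) (by positivity)).const_mul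
    ((Real.sqrt (2 * π * v))⁻¹)
  refine h.congr (Filter.Eventually.of_forall fun x => ?_)
  simp only [gaussianPDFReal_def]
  have : -(2 * (v:ℝ))⁻¹ * x ^ 2 = -(x - 0)^2/(2*(v:ℝ)) := by field_simp; ring
  rw [← this]
  simp only [id_eq]
  ring

lemma inner_int {v : ℝ≥0} (hv : 0 < (v:ℝ)) (y : ℝ) :
    ∫ x in Set.Ioi (-y), x ∂(gaussianReal 0 v) = (v:ℝ) * gaussianPDFReal 0 v y := by
  rw [setIntegral_gr (by exact_mod_cast hv.ne') _ measurableSet_Ioi]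
  have h1 : ∀ x : ℝ, gaussianPDFReal 0 v x * x
      = (Real.sqrt (2 * π * v))⁻¹ * (x * Real.exp (-x^2 / (2*(v:ℝ)))) := by
    intro x
    simp only [gaussianPDFReal_def]
    ring_nf
  rw [integral_congr_ae (Filter.Eventually.of_forall fun x => h1 x),
    integral_const_mul, ftc_gauss hv]
  simp only [gaussianPDFReal_def]
  rw [neg_pow, show ((-1:ℝ)^2) = 1 by norm_num]
  ring

lemma integral_gr {v : ℝ≥0} (hv : v ≠ 0) (f : ℝ → ℝ) :
    ∫ x, f x ∂(gaussianReal 0 v) = ∫ x, gaussianPDFReal 0 v x * f x := by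
  have := setIntegral_gr hv f MeasurableSet.univ
  simpa [Measure.restrict_univ] using this

lemma integrable_fst_prod {v w : ℝ≥0} (hv : 0 < (v:ℝ)) (hw : 0 < (w:ℝ)) :
    Integrable (fun z : ℝ × ℝ => z.1) ((gaussianReal 0 v).prod (gaussianReal 0 w)) := by
  refine (integrable_prod_iff measurable_fst.aestronglyMeasurable).2 ⟨?_, ?_⟩
  · exact Filter.Eventually.of_forall fun x => integrable_const x
  · simpa using (integrable_id_gr hv).norm

lemma key {v w : ℝ≥0} (hv : 0 < (v:ℝ)) (hw : 0 < (w:ℝ)) :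
    ∫ z in {z : ℝ × ℝ | 0 < z.1 + z.2}, z.1
        ∂((gaussianReal 0 v).prod (gaussianReal 0 w))
      = (v:ℝ) / Real.sqrt (2*π*((v:ℝ)+(w:ℝ))) := by
  have hv' : (v:ℝ) ≠ 0 := hv.ne'
  have hw' : (w:ℝ) ≠ 0 := hw.ne'
  have hA : MeasurableSet {z : ℝ × ℝ | 0 < z.1 + z.2} :=
    measurableSet_lt measurable_const (measurable_fst.add measurable_snd)
  rw [← integral_indicator hA]
  have hint : Integrable ({z : ℝ × ℝ | 0 < z.1 + z.2}.indicator fun z => z.1)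
      ((gaussianReal 0 v).prod (gaussianReal 0 w)) :=
    (integrable_fst_prod hv hw).indicator hA
  rw [integral_prod_symm _ hint]
  have hinner : ∀ y : ℝ, (∫ x, {z : ℝ × ℝ | 0 < z.1 + z.2}.indicator
      (fun z => z.1) (x, y) ∂(gaussianReal 0 v)) = (v:ℝ) * gaussianPDFReal 0 v y := by
    intro y
    have h1 : ∀ x : ℝ, {z : ℝ × ℝ | 0 < z.1 + z.2}.indicator (fun z => z.1) (x, y)
        = (Set.Ioi (-y)).indicator (fun x : ℝ => x) x := by
      intro x
      simp only [Set.indicator_apply, Set.mem_setOf_eq, Set.mem_Ioi]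
      exact if_congr (by constructor <;> intro h <;> linarith) rfl rfl
    rw [integral_congr_ae (Filter.Eventually.of_forall h1),
      integral_indicator measurableSet_Ioi, inner_int hv y]
  rw [integral_congr_ae (Filter.Eventually.of_forall hinner),
    integral_gr (by exact_mod_cast hw.ne') _]
  set b : ℝ := ((v:ℝ)+(w:ℝ))/(2*(v:ℝ)*(w:ℝ)) with hb
  have hbpos : 0 < b := by positivity
  have hcomb : ∀ y : ℝ, gaussianPDFReal 0 w y * ((v:ℝ) * gaussianPDFReal 0 v y)
      = ((v:ℝ) * ((Real.sqrt (2*π*w))⁻¹ * (Real.sqrt (2*π*v))⁻¹)) * Real.exp (-b * y^2) := by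
    intro y
    simp only [gaussianPDFReal_def]
    rw [show ∀ a c : ℝ, (Real.sqrt (2*π*w))⁻¹ * Real.exp a * ((v:ℝ) *
        ((Real.sqrt (2*π*v))⁻¹ * Real.exp c))
      = ((v:ℝ) * ((Real.sqrt (2*π*w))⁻¹ * (Real.sqrt (2*π*v))⁻¹)) * Real.exp (a+c) from
        fun a c => by rw [Real.exp_add]; ring]
    congr 1
    rw [hb]
    field_simp
    ring
  rw [integral_congr_ae (Filter.Eventually.of_forall hcomb), integral_const_mul,
    integral_gaussian b]
  have hπ : 0 < π := Real.pi_pos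
  have harith : (Real.sqrt (2*π*w))⁻¹ * (Real.sqrt (2*π*v))⁻¹ * Real.sqrt (π/b)
      = (Real.sqrt (2*π*((v:ℝ)+(w:ℝ))))⁻¹ := by
    rw [← Real.sqrt_inv (2*π*w), ← Real.sqrt_inv (2*π*v), ← Real.sqrt_mul (by positivity),
      ← Real.sqrt_mul (by positivity), ← Real.sqrt_inv (2*π*((v:ℝ)+(w:ℝ)))]
    congr 1
    rw [hb]
    field_simp
  rw [mul_assoc, harith, div_eq_mul_inv]

/-- Law of a zero-mean scalar Gaussian mixture with weights `p` and standard deviations `σ`. -/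
noncomputable def gmLaw {K : ℕ} (p σ : Fin K → ℝ) : Measure ℝ :=
  ∑ k, ENNReal.ofReal (p k) • gaussianReal 0 ⟨σ k^2, sq_nonneg (σ k)⟩

lemma gm_prob {K : ℕ} (p σ : Fin K → ℝ) (hp : ∀ k, 0 ≤ p k) (hsum : ∑ k, p k = 1) :
    IsProbabilityMeasure (gmLaw p σ) := by
  constructor
  rw [gmLaw, Measure.finset_sum_apply]
  simp only [Measure.smul_apply, measure_univ, smul_eq_mul, mul_one]
  have hu : ∀ k, (gaussianReal 0 ⟨σ k^2, sq_nonneg (σ k)⟩) Set.univ = 1 := fun k =>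
    (inferInstance : IsProbabilityMeasure (gaussianReal 0 (NNReal.mk _ (sq_nonneg (σ k))))).measure_univ
  simp only [hu, mul_one]
  rw [← ENNReal.ofReal_sum_of_nonneg (fun k _ => hp k), hsum, ENNReal.ofReal_one]

lemma gm_prod {K : ℕ} (p σ : Fin K → ℝ) (ν : Measure ℝ) [SFinite ν] :
    (gmLaw p σ).prod ν
      = ∑ k, ENNReal.ofReal (p k) • ((gaussianReal 0 ⟨σ k^2, sq_nonneg (σ k)⟩).prod ν) := by
  ext s hs
  rw [Measure.prod_apply hs, gmLaw, lintegral_finset_sum_measure, Measure.finset_sum_apply]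
  refine Finset.sum_congr rfl fun k _ => ?_
  rw [Measure.smul_apply, Measure.prod_apply hs, lintegral_smul_measure, smul_eq_mul]

lemma gr_neg (v : ℝ≥0) :
    Measure.map (fun x : ℝ => -x) (gaussianReal 0 v) = gaussianReal 0 v := by
  have h := gaussianReal_map_const_mul (μ := 0) (v := v) (-1)
  have h2 : NNReal.mk ((-1:ℝ)^2) (sq_nonneg _) = 1 := by
    ext; norm_num
  rw [h2, one_mul, mul_zero] at h
  rw [← h]
  congr 1
  funext x
  simp

lemma gm_neg {K : ℕ} (p σ : Fin K → ℝ) :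
    Measure.map (fun x : ℝ => -x) (gmLaw p σ) = gmLaw p σ := by
  ext s hs
  rw [Measure.map_apply measurable_neg hs, gmLaw, Measure.finset_sum_apply,
    Measure.finset_sum_apply]
  refine Finset.sum_congr rfl fun k _ => ?_
  rw [Measure.smul_apply, Measure.smul_apply]
  congr 1
  rw [← Measure.map_apply measurable_neg hs]
  exact congrArg (fun μ : Measure ℝ => μ s) (gr_neg _)

lemma halfc {v w : ℝ} (hv : 0 < v) (hw : 0 < w) :
    v / Real.sqrt (2*π*(v+w)) = (1/2) * (Real.sqrt (2/π) * (v / Real.sqrt (v+w))) := by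
  have hπ : 0 < π := Real.pi_pos
  have h1 : Real.sqrt (2*π*(v+w)) = Real.sqrt 2 * Real.sqrt π * Real.sqrt (v+w) := by
    rw [Real.sqrt_mul (by positivity), Real.sqrt_mul (by norm_num)]
  have h2 : Real.sqrt (2/π) = Real.sqrt 2 / Real.sqrt π :=
    Real.sqrt_div (by norm_num) π
  have h22 : Real.sqrt 2 * Real.sqrt 2 = 2 := Real.mul_self_sqrt (by norm_num)
  have hs2 : (0:ℝ) < Real.sqrt 2 := Real.sqrt_pos.2 (by norm_num)
  have hsπ : (0:ℝ) < Real.sqrt π := Real.sqrt_pos.2 hπ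
  have hsvw : (0:ℝ) < Real.sqrt (v+w) := Real.sqrt_pos.2 (by positivity)
  rw [h1, h2]
  field_simp
  linear_combination -h22

theorem cme_one_bit_gmm_linear {K : ℕ} (p σ : Fin K → ℝ)
    (hp : ∀ k, 0 ≤ p k) (hsum : ∑ k, p k = 1) (hσ : ∀ k, 0 < σ k)
    (η : ℝ) (hη : 0 < η) :
    MeasureTheory.condExp
        (MeasurableSpace.comap (fun z : ℝ × ℝ => Real.sign (z.1 + z.2)) inferInstance)
        ((gmLaw p σ).prod (gaussianReal 0 ⟨η^2, sq_nonneg η⟩))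
        (fun z : ℝ × ℝ => z.1)
      =ᵐ[(gmLaw p σ).prod (gaussianReal 0 ⟨η^2, sq_nonneg η⟩)]
    fun z : ℝ × ℝ =>
      Real.sqrt (2/π) * (∑ k, p k * (σ k^2 / Real.sqrt (σ k^2 + η^2)))
        * Real.sign (z.1 + z.2) := by
  classical
  set w : ℝ≥0 := ⟨η^2, sq_nonneg η⟩ with hwdef
  set ν : Measure ℝ := gaussianReal 0 w with hν
  set P : Measure (ℝ × ℝ) := (gmLaw p σ).prod ν with hP
  set q : ℝ × ℝ → ℝ := fun z => Real.sign (z.1 + z.2) with hq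
  set c : ℝ := Real.sqrt (2/π) * (∑ k, p k * (σ k^2 / Real.sqrt (σ k^2 + η^2))) with hc
  have hw : (0:ℝ) < (w:ℝ) := pow_pos hη 2
  have hw0 : w ≠ 0 := by
    intro h
    rw [h] at hw
    simp at hw
  set vk : Fin K → ℝ≥0 := fun k => ⟨σ k^2, sq_nonneg (σ k)⟩ with hvk
  have hvkpos : ∀ k, (0:ℝ) < (vk k : ℝ) := fun k => by
    exact pow_pos (hσ k) 2
  haveI : IsProbabilityMeasure (gmLaw p σ) := gm_prob p σ hp hsum
  haveI : IsProbabilityMeasure P := by rw [hP]; infer_instance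
  have hqmeas : Measurable q := msign.comp (measurable_fst.add measurable_snd)
  have hm : MeasurableSpace.comap q inferInstance ≤ (inferInstance : MeasurableSpace (ℝ × ℝ)) :=
    hqmeas.comap_le
  -- decomposition of the product measure
  have hPsum : P = ∑ k, ENNReal.ofReal (p k) • ((gaussianReal 0 (vk k)).prod ν) := by
    rw [hP, gm_prod]
  -- atoms
  set Ap : Set (ℝ × ℝ) := {z | 0 < z.1 + z.2} with hAp
  set Am : Set (ℝ × ℝ) := {z | z.1 + z.2 < 0} with hAm
  set A0 : Set (ℝ × ℝ) := {z | z.1 + z.2 = 0} with hA0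
  have hApm : MeasurableSet Ap := measurableSet_lt measurable_const (measurable_fst.add measurable_snd)
  have hAmm : MeasurableSet Am := measurableSet_lt (measurable_fst.add measurable_snd) measurable_const
  have hA0m : MeasurableSet A0 := (measurable_fst.add measurable_snd) (measurableSet_singleton 0)
  -- integrability of f
  have hfk : ∀ k, Integrable (fun z : ℝ × ℝ => z.1) ((gaussianReal 0 (vk k)).prod ν) :=
    fun k => integrable_fst_prod (hvkpos k) hw
  have hf : Integrable (fun z : ℝ × ℝ => z.1) P := by
    rw [hPsum]
    refine integrable_finset_sum_measure.2 fun k _ => ?_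
    exact (hfk k).smul_measure ENNReal.ofReal_ne_top
  -- A0 is null
  have hA0null : P A0 = 0 := by
    rw [hP, Measure.prod_apply hA0m]
    have hpre : ∀ x : ℝ, (Prod.mk x ⁻¹' A0) = {-x} := by
      intro x
      ext y
      simp only [hA0, Set.mem_preimage, Set.mem_setOf_eq, Set.mem_singleton_iff]
      constructor <;> intro h <;> linarith
    have hz : ∀ x : ℝ, ν (Prod.mk x ⁻¹' A0) = 0 := by
      intro x
      rw [hpre x, hν]
      exact gaussianReal_absolutelyContinuous 0 hw0 (measure_singleton _)
    simp only [hz]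
    simp
  -- neg invariance
  have hPneg : Measure.map (fun z : ℝ × ℝ => -z) P = P := by
    have h1 : (fun z : ℝ × ℝ => -z) = Prod.map (fun x : ℝ => -x) (fun x : ℝ => -x) := rfl
    rw [hP, h1, ← Measure.map_prod_map _ _ measurable_neg measurable_neg, gm_neg, hν, gr_neg]
  have hnegpre : (fun z : ℝ × ℝ => -z) ⁻¹' Am = Ap := by
    ext z
    simp only [hAm, hAp, Set.mem_preimage, Set.mem_setOf_eq, Prod.fst_neg, Prod.snd_neg]
    constructor <;> intro h <;> linarith
  -- measure of atoms
  have hPAmp : P Am = P Ap := by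
    conv_lhs => rw [← hPneg]
    rw [Measure.map_apply measurable_neg hAmm, hnegpre]
  have hunion : Ap ∪ Am = A0ᶜ := by
    ext z
    simp only [hAp, hAm, hA0, Set.mem_union, Set.mem_setOf_eq, Set.mem_compl_iff]
    constructor
    · rintro (h | h) <;> intro h' <;> linarith
    · intro h
      rcases lt_trichotomy (z.1 + z.2) 0 with h' | h' | h'
      · exact Or.inr h'
      · exact absurd h' h
      · exact Or.inl h'
  have hdisj : Disjoint Ap Am := by
    rw [Set.disjoint_left]
    intro z hz hz'
    simp only [hAp, Set.mem_setOf_eq] at hz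
    simp only [hAm, Set.mem_setOf_eq] at hz'
    linarith
  have hcompl : P A0ᶜ = 1 := by
    rw [measure_compl hA0m (measure_ne_top P A0), hA0null, measure_univ, tsub_zero]
  have hsum2 : P Ap + P Ap = 1 := by
    nth_rewrite 2 [← hPAmp]
    rw [← measure_union hdisj hAmm, hunion, hcompl]
  have hPApReal : (P Ap).toReal = 1/2 := by
    have hne : P Ap ≠ ⊤ := measure_ne_top P Ap
    have := congrArg ENNReal.toReal hsum2
    rw [ENNReal.toReal_add hne hne, ENNReal.toReal_one] at this
    linarith
  have hPAmReal : (P Am).toReal = 1/2 := by rw [hPAmp]; exact hPApReal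
  -- the value S
  set S : ℝ := ∑ k, p k * (σ k^2 / Real.sqrt (2*π*(σ k^2 + η^2))) with hS
  have hcS : c = 2 * S := by
    rw [hc, hS, Finset.mul_sum, Finset.mul_sum]
    refine Finset.sum_congr rfl fun k _ => ?_
    have := halfc (v := σ k^2) (w := η^2) (pow_pos (hσ k) 2) (pow_pos hη 2)
    rw [this]
    ring
  -- integral over Ap
  have hIp : ∫ z in Ap, z.1 ∂P = S := by
    rw [hPsum, hS, ← integral_indicator hApm, integral_finset_sum_measure]
    · refine Finset.sum_congr rfl fun k _ => ?_
      rw [integral_smul_measure, ENNReal.toReal_ofReal (hp k), smul_eq_mul,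
        integral_indicator hApm]
      have hk := key (v := vk k) (w := w) (hvkpos k) hw
      rw [hAp, hk]
      congr 1
    · exact fun k _ => ((hfk k).indicator hApm).smul_measure ENNReal.ofReal_ne_top
  -- integral over Am
  have hIm : ∫ z in Am, z.1 ∂P = -S := by
    have h1 : ∫ z in Am, z.1 ∂P = ∫ z in Ap, (-z : ℝ × ℝ).1 ∂P := by
      conv_lhs => rw [← hPneg]
      rw [setIntegral_map hAmm (by
          rw [hPneg]; exact measurable_fst.aestronglyMeasurable) measurable_neg.aemeasurable,
        hnegpre]
    rw [h1]
    simp only [Prod.fst_neg]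
    rw [integral_neg, hIp]
  -- function g
  set g : ℝ × ℝ → ℝ := fun z => c * q z with hg
  have hgmeas_m : Measurable[MeasurableSpace.comap q inferInstance] g :=
    (measurable_id.const_mul c).comp (Measurable.of_comap_le le_rfl)
  have hgmeas : Measurable g := hgmeas_m.mono hm le_rfl
  have hgbdd : ∀ z, ‖g z‖ ≤ |c| := by
    intro z
    rw [hg]
    simp only [norm_mul, Real.norm_eq_abs]
    have : |q z| ≤ 1 := by
      rcases Real.sign_apply_eq (z.1 + z.2) with h | h | h <;> rw [hq] <;> simp [h]
    calc |c| * |q z| ≤ |c| * 1 := by gcongr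
      _ = |c| := mul_one _
  have hgint : Integrable g P :=
    (integrable_const (|c|)).mono' hgmeas.aestronglyMeasurable
      (Filter.Eventually.of_forall hgbdd)
  -- integrals of g over atoms
  have hgIp : ∫ z in Ap, g z ∂P = S := by
    have : ∀ z ∈ Ap, g z = c := by
      intro z hz
      simp only [hAp, Set.mem_setOf_eq] at hz
      rw [hg, hq]
      simp only
      rw [Real.sign_of_pos hz, mul_one]
    rw [setIntegral_congr_fun hApm this, setIntegral_const, measureReal_def, hPApReal, hcS, smul_eq_mul]
    ring
  have hgIm : ∫ z in Am, g z ∂P = -S := by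
    have : ∀ z ∈ Am, g z = -c := by
      intro z hz
      simp only [hAm, Set.mem_setOf_eq] at hz
      rw [hg, hq]
      simp only
      rw [Real.sign_of_neg hz]
      ring
    rw [setIntegral_congr_fun hAmm this, setIntegral_const, measureReal_def, hPAmReal, hcS, smul_eq_mul]
    ring
  -- decomposition of m-measurable sets
  have hdec : ∀ (B : Set ℝ), ∀ h : ℝ × ℝ → ℝ, Integrable h P →
      ∫ z in q ⁻¹' B, h z ∂P
        = (if (1:ℝ) ∈ B then ∫ z in Ap, h z ∂P else 0)
          + (if (-1:ℝ) ∈ B then ∫ z in Am, h z ∂P else 0) := by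
    intro B h hh
    set T : Set (ℝ × ℝ) := (if (1:ℝ) ∈ B then Ap else ∅) ∪ (if (-1:ℝ) ∈ B then Am else ∅)
      with hT
    have hsub1 : q ⁻¹' B \ T ⊆ A0 := by
      intro z hz
      simp only [hA0, Set.mem_setOf_eq]
      by_contra h0
      rcases lt_trichotomy (z.1 + z.2) 0 with hlt | heq | hgt
      · have hqz : q z = -1 := by rw [hq]; exact Real.sign_of_neg hlt
        have hzB : (-1:ℝ) ∈ B := by
          have := hz.1
          simp only [Set.mem_preimage] at this
          rwa [hqz] at this
        exact hz.2 (by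
          rw [hT]
          right
          rw [if_pos hzB]
          exact hlt)
      · exact h0 heq
      · have hqz : q z = 1 := by rw [hq]; exact Real.sign_of_pos hgt
        have hzB : (1:ℝ) ∈ B := by
          have := hz.1
          simp only [Set.mem_preimage] at this
          rwa [hqz] at this
        exact hz.2 (by
          rw [hT]
          left
          rw [if_pos hzB]
          exact hgt)
    have hsub2 : T \ q ⁻¹' B ⊆ A0 := by
      intro z hz
      simp only [hA0, Set.mem_setOf_eq]
      by_contra h0
      have hzT := hz.1
      rw [hT] at hzT
      rcases hzT with hzT | hzT
      · by_cases h1 : (1:ℝ) ∈ B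
        · rw [if_pos h1] at hzT
          have hgt : 0 < z.1 + z.2 := hzT
          have hqz : q z = 1 := by rw [hq]; exact Real.sign_of_pos hgt
          exact hz.2 (by simp only [Set.mem_preimage]; rw [hqz]; exact h1)
        · rw [if_neg h1] at hzT
          exact hzT
      · by_cases h1 : (-1:ℝ) ∈ B
        · rw [if_pos h1] at hzT
          have hlt : z.1 + z.2 < 0 := hzT
          have hqz : q z = -1 := by rw [hq]; exact Real.sign_of_neg hlt
          exact hz.2 (by simp only [Set.mem_preimage]; rw [hqz]; exact h1)
        · rw [if_neg h1] at hzT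
          exact hzT
    have haeeq : q ⁻¹' B =ᵐ[P] T :=
      (ae_eq_set).2 ⟨measure_mono_null hsub1 hA0null, measure_mono_null hsub2 hA0null⟩
    rw [setIntegral_congr_set haeeq, hT]
    by_cases h1 : (1:ℝ) ∈ B <;> by_cases h2 : (-1:ℝ) ∈ B
    · rw [if_pos h1, if_pos h2, if_pos h1, if_pos h2]
      exact setIntegral_union hdisj hAmm hh.integrableOn hh.integrableOn
    · rw [if_pos h1, if_neg h2, if_pos h1, if_neg h2, Set.union_empty, add_zero]
    · rw [if_neg h1, if_pos h2, if_neg h1, if_pos h2, Set.empty_union, zero_add]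
    · rw [if_neg h1, if_neg h2, if_neg h1, if_neg h2, Set.union_empty, add_zero]
      simp
  -- conclude
  haveI : SigmaFinite (P.trim hm) := by infer_instance
  refine (ae_eq_condExp_of_forall_setIntegral_eq hm hf
    (fun s _ _ => hgint.integrableOn) ?_ ?_).symm
  · intro s hs _
    obtain ⟨B, hB, rfl⟩ := hs
    rw [hdec B g hgint, hdec B (fun z => z.1) hf, hIp, hIm, hgIp, hgIm]
  · exact StronglyMeasurable.aestronglyMeasurable hgmeas_m.stronglyMeasurable
end

section
/- For every integer M ≥ 1, the value g(M) = (4M²/π) sin²(π/(4M)) satisfies 2/π ≤ g(M) < π/4, with g(1) = 2/π. -/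
open Real

theorem gain_factor_bounds :
    (∀ M : ℕ, 1 ≤ M →
      2/π ≤ (4 * (M:ℝ)^2 / π) * Real.sin (π / (4*(M:ℝ)))^2 ∧
      (4 * (M:ℝ)^2 / π) * Real.sin (π / (4*(M:ℝ)))^2 < π/4) ∧
    (4 * (1:ℝ)^2 / π) * Real.sin (π / (4*(1:ℝ)))^2 = 2/π := by
  have hπ := Real.pi_pos
  constructor
  · intro M hM
    have hM0 : (1:ℝ) ≤ (M:ℝ) := by exact_mod_cast hM
    have hMpos : (0:ℝ) < (M:ℝ) := by linarith
    set x : ℝ := π / (4*(M:ℝ)) with hx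
    have hx0 : 0 < x := by positivity
    have hxle : x ≤ π/4 := by
      rw [hx, div_le_div_iff₀ (by positivity) (by norm_num)]
      nlinarith
    have hsinpos : 0 < Real.sin x :=
      Real.sin_pos_of_pos_of_lt_pi hx0 (by linarith [Real.pi_gt_three])
    constructor
    · -- lower bound via concavity
      have h0 : (0:ℝ) ∈ Set.Icc 0 π := by constructor <;> linarith
      have h4 : π/4 ∈ Set.Icc 0 π := by constructor <;> linarith
      have ha : (0:ℝ) ≤ 1 - 1/(M:ℝ) := by
        have : 1/(M:ℝ) ≤ 1 := by
          rw [div_le_one hMpos]; exact hM0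
        linarith
      have hb : (0:ℝ) ≤ 1/(M:ℝ) := by positivity
      have hab : (1 - 1/(M:ℝ)) + 1/(M:ℝ) = 1 := by ring
      have hconc := strictConcaveOn_sin_Icc.concaveOn.2 h0 h4 ha hb hab
      simp only [smul_eq_mul, Real.sin_zero, mul_zero, zero_add] at hconc
      have hxeq : 1/(M:ℝ) * (π/4) = x := by
        rw [hx]; ring
      rw [hxeq] at hconc
      have hsin4 : Real.sin (π/4) = Real.sqrt 2 / 2 := Real.sin_pi_div_four
      rw [hsin4] at hconc
      have hsq2 : Real.sqrt 2 ^ 2 = 2 := Real.sq_sqrt (by norm_num)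
      have hsq2pos : 0 < Real.sqrt 2 := Real.sqrt_pos.mpr (by norm_num)
      -- sin x ≥ √2/(2M)
      have h1 : Real.sqrt 2 / (2*(M:ℝ)) ≤ Real.sin x := by
        have heq : 1/(M:ℝ) * (Real.sqrt 2 / 2) = Real.sqrt 2 / (2*(M:ℝ)) := by
          field_simp
        linarith [heq ▸ hconc]
      have h2 : (Real.sqrt 2 / (2*(M:ℝ)))^2 = 1 / (2*(M:ℝ)^2) := by
        rw [div_pow, hsq2]; ring
      have hkey : 1 / (2 * (M:ℝ)^2) ≤ Real.sin x ^ 2 := by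
        have := pow_le_pow_left₀ (by positivity) h1 2
        rwa [h2] at this
      have hone : (1:ℝ) ≤ Real.sin x ^ 2 * (2*(M:ℝ)^2) :=
        (div_le_iff₀ (by positivity)).mp hkey
      rw [div_le_iff₀ hπ]
      have hA : (4 * (M:ℝ)^2 / π) * Real.sin x ^2 * π = 4 * (M:ℝ)^2 * Real.sin x ^2 := by
        field_simp
      rw [hA]
      nlinarith [hone]
    · -- upper bound
      have hsinlt : Real.sin x < x := Real.sin_lt hx0
      have hsq : Real.sin x ^ 2 < x ^ 2 := by nlinarith
      have hxsq : x ^ 2 = π^2 / (16 * (M:ℝ)^2) := by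
        rw [hx]; field_simp; ring
      rw [hxsq] at hsq
      have h16 : (0:ℝ) < 16*(M:ℝ)^2 := by positivity
      have h : Real.sin x^2 * (16*(M:ℝ)^2) < π^2 := (lt_div_iff₀ h16).mp hsq
      rw [div_mul_eq_mul_div, div_lt_iff₀ hπ]
      nlinarith
  · have : Real.sin (π / (4*(1:ℝ))) = Real.sqrt 2 / 2 := by
      norm_num [Real.sin_pi_div_four]
    rw [this]
    have hsq2 : Real.sqrt 2 ^ 2 = 2 := Real.sq_sqrt (by norm_num)
    field_simp
    nlinarith
end
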